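/- If i, k ≥ 0 are integers with i ≡ k (mod r), then c_i = c_k; in particular c_{i+r} = c_i for all i ≥ 0. -/

import Mathlib

noncomputable section

/-- The sequence `c_i` defined by `c₀ = c` and
`c_i = q·(c_{i−1} + ν − ν·q^{2(i−1)}·γ)` for `i ≥ 1`. -/
def cseq (q ν γ c : ℂ) : ℕ → ℂ
  | 0 => c
  | i + 1 => q * (cseq q ν γ c i + ν - ν * q ^ (2 * i) * γ)

lemma cseq_closed (q ν γ c : ℂ) (i : ℕ) :
    cseq q ν γ c i = q ^ i * c + ν * (∑ j ∈ Finset.range i, q ^ (j + 1))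
      - ν * γ * (∑ j ∈ Finset.range i, q ^ (i + j)) := by
  induction i with
  | zero => simp [cseq]
  | succ i ih =>
    rw [cseq, ih, Finset.sum_range_succ', Finset.sum_range_succ]
    have h1 : ∀ j, (q:ℂ) ^ (i + 1 + j) = q * q ^ (i + j) := by
      intro j; rw [show i + 1 + j = (i + j) + 1 by ring, pow_succ]; ring
    have h2 : (∑ j ∈ Finset.range i, q ^ (i + 1 + j))
        = q * ∑ j ∈ Finset.range i, q ^ (i + j) := by
      rw [Finset.mul_sum]; exact Finset.sum_congr rfl fun j _ => h1 j
    have h3 : (∑ j ∈ Finset.range i, q ^ (j + 1 + 1))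
        = q * ∑ j ∈ Finset.range i, q ^ (j + 1) := by
      rw [Finset.mul_sum]; refine Finset.sum_congr rfl fun j _ => ?_
      rw [pow_succ]; ring
    rw [h2, h3, show i + 1 + i = 2 * i + 1 by ring, pow_succ q (2 * i), pow_succ q i]
    ring

theorem cseq_periodic (q ν γ c : ℂ) (r : ℕ) (hr : 1 < r) (hq : IsPrimitiveRoot q r) :
    (∀ i k : ℕ, i % r = k % r → cseq q ν γ c i = cseq q ν γ c k) ∧
      ∀ i : ℕ, cseq q ν γ c (i + r) = cseq q ν γ c i := by
  have hgs : (∑ j ∈ Finset.range r, q ^ j) = 0 := hq.geom_sum_eq_zero hr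
  have hq1 : q ^ r = 1 := hq.pow_eq_one
  have hcr : cseq q ν γ c r = c := by
    rw [cseq_closed, hq1]
    have h1 : (∑ j ∈ Finset.range r, q ^ (j + 1)) = q * ∑ j ∈ Finset.range r, q ^ j := by
      rw [Finset.mul_sum]; refine Finset.sum_congr rfl fun j _ => ?_
      rw [pow_succ]; ring
    have h2 : (∑ j ∈ Finset.range r, q ^ (r + j))
        = q ^ r * ∑ j ∈ Finset.range r, q ^ j := by
      rw [Finset.mul_sum]; refine Finset.sum_congr rfl fun j _ => (pow_add q r j)
    rw [h1, h2, hgs]; ring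
  have key : ∀ i : ℕ, cseq q ν γ c (i + r) = cseq q ν γ c i := by
    intro i
    induction i with
    | zero => simpa [cseq] using hcr
    | succ i ih =>
      have : i + 1 + r = (i + r) + 1 := by ring
      rw [this, cseq, cseq, ih]
      have : q ^ (2 * (i + r)) = q ^ (2 * i) := by
        rw [show 2 * (i + r) = 2 * i + r * 2 by ring, pow_add, pow_mul q r 2, hq1,
          one_pow, mul_one]
      rw [this]
  refine ⟨?_, key⟩
  have keyn : ∀ n i : ℕ, cseq q ν γ c (i + n * r) = cseq q ν γ c i := by
    intro n
    induction n with
    | zero => simp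
    | succ n ih =>
      intro i
      rw [show i + (n + 1) * r = (i + n * r) + r by ring, key, ih]
  intro i k h
  have hi : cseq q ν γ c i = cseq q ν γ c (i % r) := by
    conv_lhs => rw [show i = i % r + (i / r) * r by rw [Nat.mod_add_div']]
    exact keyn _ _
  have hk : cseq q ν γ c k = cseq q ν γ c (k % r) := by
    conv_lhs => rw [show k = k % r + (k / r) * r by rw [Nat.mod_add_div']]
    exact keyn _ _
  rw [hi, hk, h]
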